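/- There exists a constant C > 0 such that for all s > 0 and all x > 0, ∫₀^∞ (y/x)² p(s,x,y)² dy ≤ C/√s, where p(s,x,y) = (1/√(4πs)) (exp(−(x−y)²/(4s)) − exp(−(x+y)²/(4s))) is the Dirichlet heat kernel on the half-line. -/

import Mathlib

open MeasureTheory Real

noncomputable def heatp (s x y : ℝ) : ℝ :=
  (1 / Real.sqrt (4 * Real.pi * s)) *
    (Real.exp (-(x - y) ^ 2 / (4 * s)) - Real.exp (-(x + y) ^ 2 / (4 * s)))

noncomputable def gker (u : ℝ) : ℝ := (1 + u ^ 2) ^ 2 * Real.exp (-u ^ 2 / 2)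

lemma gker_nonneg (u : ℝ) : 0 ≤ gker u := by unfold gker; positivity

lemma gker_integrable : Integrable gker := by
  have h0 : Integrable (fun u : ℝ => Real.exp (-(1/2 : ℝ) * u ^ 2)) :=
    integrable_exp_neg_mul_sq (by norm_num)
  have h2 : Integrable (fun u : ℝ => u ^ (2:ℝ) * Real.exp (-(1/2 : ℝ) * u ^ 2)) :=
    integrable_rpow_mul_exp_neg_mul_sq (by norm_num : (0:ℝ) < 1/2) (by norm_num : (-1:ℝ) < 2)
  have h4 : Integrable (fun u : ℝ => u ^ (4:ℝ) * Real.exp (-(1/2 : ℝ) * u ^ 2)) :=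
    integrable_rpow_mul_exp_neg_mul_sq (by norm_num : (0:ℝ) < 1/2) (by norm_num : (-1:ℝ) < 4)
  refine ((h0.add (h2.const_mul 2)).add h4).congr ?_
  filter_upwards with u
  have e2 : u ^ (2:ℝ) = u ^ 2 := by
    rw [show (2:ℝ) = ((2:ℕ):ℝ) by norm_num, Real.rpow_natCast]
  have e4 : u ^ (4:ℝ) = u ^ 4 := by
    rw [show (4:ℝ) = ((4:ℕ):ℝ) by norm_num, Real.rpow_natCast]
  simp only [e2, e4, gker, Pi.add_apply]
  rw [show -u ^ 2 / 2 = -(1/2 : ℝ) * u ^ 2 by ring]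
  ring

lemma gker_integral_pos : 0 < ∫ u : ℝ, gker u := by
  have h0 : Integrable (fun u : ℝ => Real.exp (-(1:ℝ) * u ^ 2)) :=
    integrable_exp_neg_mul_sq one_pos
  have hle : ∀ u : ℝ, Real.exp (-(1:ℝ) * u ^ 2) ≤ gker u := by
    intro u
    have h1 : Real.exp (-(1:ℝ) * u ^ 2) ≤ Real.exp (-u ^ 2 / 2) :=
      Real.exp_le_exp.2 (by nlinarith [sq_nonneg u])
    have h2 : (1:ℝ) * Real.exp (-u ^ 2 / 2) ≤ (1 + u ^ 2) ^ 2 * Real.exp (-u ^ 2 / 2) := by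
      have : (1:ℝ) ≤ (1 + u ^ 2) ^ 2 := by nlinarith [sq_nonneg u]
      exact mul_le_mul_of_nonneg_right this (Real.exp_pos _).le
    simpa [gker] using h1.trans (by simpa using h2)
  have hmono := integral_mono h0 gker_integrable hle
  have hpos : 0 < ∫ u : ℝ, Real.exp (-(1:ℝ) * u ^ 2) := by
    rw [integral_gaussian]
    exact Real.sqrt_pos.mpr (by positivity)
  linarith

lemma key_scalar {s x y : ℝ} (hs : 0 < s) (hx : 0 < x) (hy : 0 < y) :
    (y / x) * (1 - Real.exp (-(x * y / s))) ≤ 2 * (1 + (y - x) ^ 2 / s) := by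
  have h1 : 1 - Real.exp (-(x * y / s)) ≤ 1 := by linarith [Real.exp_pos (-(x * y / s))]
  have h2 : 1 - Real.exp (-(x * y / s)) ≤ x * y / s := by
    linarith [Real.add_one_le_exp (-(x * y / s))]
  rcases le_or_gt (x ^ 2) s with hcase | hcase
  · have hb : (y / x) * (1 - Real.exp (-(x * y / s))) ≤ (y / x) * (x * y / s) :=
      mul_le_mul_of_nonneg_left h2 (by positivity)
    have e : (y / x) * (x * y / s) = y ^ 2 / s := by field_simp
    rw [e] at hb
    refine hb.trans ?_
    have hy2 : y ^ 2 ≤ 2 * s + 2 * (y - x) ^ 2 := by nlinarith [sq_nonneg (y - 2 * x)]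
    calc y ^ 2 / s ≤ (2 * s + 2 * (y - x) ^ 2) / s := by gcongr
      _ = 2 * (1 + (y - x) ^ 2 / s) := by field_simp
  · have hb : (y / x) * (1 - Real.exp (-(x * y / s))) ≤ y / x :=
      mul_le_of_le_one_right (by positivity) h1
    refine hb.trans ?_
    rw [div_le_iff₀ hx,
      show 2 * (1 + (y - x) ^ 2 / s) * x = (2 * x * s + 2 * x * (y - x) ^ 2) / s by
        field_simp, le_div_iff₀ hs]
    nlinarith [sq_nonneg (x * (y - x) - s), mul_nonneg hs.le (sub_nonneg.2 hcase.le),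
      mul_pos hx hs, mul_nonneg hx.le (sq_nonneg (y - x))]

lemma heatp_ptwise {s x y : ℝ} (hs : 0 < s) (hx : 0 < x) (hy : 0 < y) :
    (y / x) ^ 2 * (heatp s x y) ^ 2 ≤
      (1 / (Real.pi * s)) * gker ((Real.sqrt s)⁻¹ * (y - x)) := by
  have hπ := Real.pi_pos
  set A := Real.exp (-(x - y) ^ 2 / (4 * s)) with hA
  set e := Real.exp (-(x * y / s)) with he
  have hB : Real.exp (-(x + y) ^ 2 / (4 * s)) = A * e := by
    rw [hA, he, ← Real.exp_add]
    congr 1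
    field_simp
    ring
  have hApos : 0 < A := Real.exp_pos _
  have he1 : e ≤ 1 := Real.exp_le_one_iff.2 (neg_nonpos.2 (by positivity))
  have hkey := key_scalar hs hx hy
  have base : (y / x) * (A - A * e) ≤ A * (2 * (1 + (y - x) ^ 2 / s)) := by
    have heq : (y / x) * (A - A * e) = A * ((y / x) * (1 - e)) := by ring
    rw [heq]
    exact mul_le_mul_of_nonneg_left hkey hApos.le
  have lhs_nonneg : 0 ≤ (y / x) * (A - A * e) := by
    have : 0 ≤ A - A * e := by nlinarith
    positivity
  have hsq := pow_le_pow_left₀ lhs_nonneg base 2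
  -- rewrite both sides
  have hheat : heatp s x y = (1 / Real.sqrt (4 * Real.pi * s)) * (A - A * e) := by
    rw [heatp, hB]
  have hc2 : (1 / Real.sqrt (4 * Real.pi * s)) ^ 2 = 1 / (4 * Real.pi * s) := by
    rw [div_pow, one_pow, sq_sqrt (by positivity)]
  have hA2 : A ^ 2 = Real.exp (-(y - x) ^ 2 / (2 * s)) := by
    have hexp : -(x - y) ^ 2 / (4 * s) + -(x - y) ^ 2 / (4 * s) = -(y - x) ^ 2 / (2 * s) := by
      rw [← add_div, div_eq_div_iff (by positivity) (by positivity)]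
      ring
    rw [hA, sq, ← Real.exp_add, hexp]
  have hu2 : ((Real.sqrt s)⁻¹ * (y - x)) ^ 2 = (y - x) ^ 2 / s := by
    rw [mul_pow, inv_pow, sq_sqrt hs.le]
    ring
  have hrhs : (1 / (Real.pi * s)) * gker ((Real.sqrt s)⁻¹ * (y - x)) =
      (1 / (Real.pi * s)) * (1 + (y - x) ^ 2 / s) ^ 2 * Real.exp (-(y - x) ^ 2 / (2 * s)) := by
    rw [gker, hu2]
    rw [show -((y - x) ^ 2 / s) / 2 = -(y - x) ^ 2 / (2 * s) by rw [neg_div, div_div, neg_div, mul_comm]]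
    ring
  calc (y / x) ^ 2 * (heatp s x y) ^ 2
      = (1 / Real.sqrt (4 * Real.pi * s)) ^ 2 * ((y / x) * (A - A * e)) ^ 2 := by
        rw [hheat]; ring
    _ ≤ (1 / Real.sqrt (4 * Real.pi * s)) ^ 2 * (A * (2 * (1 + (y - x) ^ 2 / s))) ^ 2 := by
        have h0 : (0:ℝ) ≤ (1 / Real.sqrt (4 * Real.pi * s)) ^ 2 := by positivity
        exact mul_le_mul_of_nonneg_left hsq h0
    _ = (1 / (4 * Real.pi * s)) * (4 * (1 + (y - x) ^ 2 / s) ^ 2 * A ^ 2) := by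
        rw [hc2]; ring
    _ = (1 / (Real.pi * s)) * gker ((Real.sqrt s)⁻¹ * (y - x)) := by
        rw [hrhs, hA2]
        field_simp

theorem ptilde_L2_bound :
    ∃ C > 0, ∀ s > 0, ∀ x > 0,
      ∫ y in Set.Ioi (0:ℝ), (y / x) ^ 2 * (heatp s x y) ^ 2 ≤ C / Real.sqrt s := by
  set I := ∫ u : ℝ, gker u with hIdef
  have hIpos : 0 < I := gker_integral_pos
  refine ⟨I / Real.pi, div_pos hIpos Real.pi_pos, ?_⟩
  intro s hs x hx
  have hπ := Real.pi_pos
  have hrs : 0 < Real.sqrt s := Real.sqrt_pos.mpr hs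
  set h : ℝ → ℝ := fun y => (1 / (Real.pi * s)) * gker ((Real.sqrt s)⁻¹ * (y - x)) with hhdef
  have hg2 : Integrable (fun y : ℝ => gker ((Real.sqrt s)⁻¹ * (y - x))) := by
    have hg1 : Integrable (fun y : ℝ => gker ((Real.sqrt s)⁻¹ * y)) :=
      gker_integrable.comp_mul_left' (inv_ne_zero hrs.ne')
    exact hg1.comp_sub_right x
  have hh_int : Integrable h := hg2.const_mul _
  have hh_nonneg : ∀ y, 0 ≤ h y := fun y => by
    have := gker_nonneg ((Real.sqrt s)⁻¹ * (y - x))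
    positivity
  -- integral of h
  have hint_h : ∫ y : ℝ, h y = (I / Real.pi) / Real.sqrt s := by
    rw [hhdef]
    rw [integral_const_mul]
    rw [integral_sub_right_eq_self (fun y => gker ((Real.sqrt s)⁻¹ * y)) x]
    rw [Measure.integral_comp_inv_mul_left gker (Real.sqrt s)]
    rw [abs_of_pos hrs, smul_eq_mul, ← hIdef]
    field_simp
    linear_combination (Real.mul_self_sqrt hs.le)
  -- integrability of f on Ioi 0
  have hf_meas : AEStronglyMeasurable (fun y => (y / x) ^ 2 * (heatp s x y) ^ 2)
      (volume.restrict (Set.Ioi (0:ℝ))) := by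
    apply Continuous.aestronglyMeasurable
    apply Continuous.mul
    · exact (continuous_id.div_const x).pow 2
    · apply Continuous.pow
      unfold heatp
      exact continuous_const.mul ((Real.continuous_exp.comp (by fun_prop)).sub
        (Real.continuous_exp.comp (by fun_prop)))
  have hf_le : ∀ y ∈ Set.Ioi (0:ℝ), (y / x) ^ 2 * (heatp s x y) ^ 2 ≤ h y := by
    intro y hy
    exact heatp_ptwise hs hx hy
  have hf_int : IntegrableOn (fun y => (y / x) ^ 2 * (heatp s x y) ^ 2) (Set.Ioi (0:ℝ)) := by
    refine (hh_int.integrableOn).mono' hf_meas ?_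
    rw [ae_restrict_iff' measurableSet_Ioi]
    filter_upwards with y hy
    rw [Real.norm_of_nonneg (by positivity)]
    exact hf_le y hy
  calc ∫ y in Set.Ioi (0:ℝ), (y / x) ^ 2 * (heatp s x y) ^ 2
      ≤ ∫ y in Set.Ioi (0:ℝ), h y :=
        setIntegral_mono_on hf_int hh_int.integrableOn measurableSet_Ioi hf_le
    _ ≤ ∫ y : ℝ, h y :=
        setIntegral_le_integral hh_int (Filter.Eventually.of_forall hh_nonneg)
    _ = (I / Real.pi) / Real.sqrt s := hint_h
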